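/- (Theorem 1, first-order necessary conditions.) Suppose the sequence of block-diagonal gains (K₁(k), K₂(k))_{k=0}^{N} minimizes the cost J_N = Σ_{k=0}^{N} [x(k)ᵀQx(k) + u(k)ᵀRu(k)] + x(N+1)ᵀP_{N+1}x(N+1) over all sequences of block-diagonal gains, where x(k+1) = (A + B·diag(K₁(k),K₂(k))) x(k) from a fixed initial state x(0). Define X₁₁(k) = x₁(k)x₁(k)ᵀ, X₁₂(k) = x₁(k)x₂(k)ᵀ, X₂₂(k) = x₂(k)x₂(k)ᵀ along the optimal closed-loop trajectory, and let P(k) be generated backward by P(k) = Q + K(k)ᵀRK(k) + (A+BK(k))ᵀP(k+1)(A+BK(k)) with terminal value P(N+1) = P_{N+1}, where K(k) = diag(K₁(k), K₂(k)). Set Υ(k) = R + BᵀP(k+1)B and M(k) = BᵀP(k+1)A, partitioned into blocks Υ_{ij}(k), M_{ij}(k) conformably. Then for every k = 0,…,N: Υ₁₁(k)K₁(k)X₁₁(k) + M₁₁(k)X₁₁(k) + Υ₁₂(k)K₂(k)X₁₂(k)ᵀ + M₁₂(k)X₁₂(k)ᵀ = 0 and Υ₂₂(k)K₂(k)X₂₂(k)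 + M₂₂(k)X₂₂(k) + Υ₁₂(k)ᵀK₁(k)X₁₂(k) + M₂₁(k)X₁₂(k) = 0. -/

import Mathlib

open Matrix

section Aux

lemma aux_key_scalar (a b : ℝ) (h : ∀ t : ℝ, 0 ≤ 2*t*a + t^2*b) : a = 0 := by
  by_contra ha
  have hb1 : (0:ℝ) < |b| + 1 := by positivity
  set ε : ℝ := 1 / (|b| + 1) with hε
  have hεpos : 0 < ε := by positivity
  have hεb : ε * (|b| + 1) = 1 := by
    rw [hε]; field_simp
  have h1 := h (-ε * a)
  have ha2 : 0 < a ^ 2 := by positivity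
  nlinarith [le_abs_self b, abs_nonneg b, mul_pos hεpos ha2, sq_nonneg (ε*a)]

lemma aux_quad_expand {n : Type*} [Fintype n] (S : Matrix n n ℝ) (hS : Sᵀ = S)
    (u w : n → ℝ) (t : ℝ) :
    (u + t • w) ⬝ᵥ S.mulVec (u + t • w)
      = u ⬝ᵥ S.mulVec u + 2*t*(w ⬝ᵥ S.mulVec u) + t^2 * (w ⬝ᵥ S.mulVec w) := by
  have hsym : u ⬝ᵥ S.mulVec w = w ⬝ᵥ S.mulVec u := by
    rw [dotProduct_mulVec, ← mulVec_transpose, hS, dotProduct_comm]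
  simp only [mulVec_add, mulVec_smul, dotProduct_add, add_dotProduct,
    dotProduct_smul, smul_dotProduct, smul_eq_mul]
  rw [hsym]; ring

lemma aux_mul_vecMulVec {n p q : Type*} [Fintype n] (M : Matrix p n ℝ)
    (a : n → ℝ) (b : q → ℝ) :
    M * vecMulVec a b = vecMulVec (M.mulVec a) b := by
  ext i j
  simp [Matrix.mul_apply, vecMulVec_apply, mulVec, dotProduct, Finset.sum_mul, mul_assoc]

lemma aux_transpose_vecMulVec {n q : Type*} (a : n → ℝ) (b : q → ℝ) :
    (vecMulVec a b)ᵀ = vecMulVec b a := by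
  ext i j; simp [vecMulVec_apply]; ring

lemma aux_conj_quad {n p : Type*} [Fintype n] [Fintype p]
    (M : Matrix p n ℝ) (S : Matrix p p ℝ) (v : n → ℝ) :
    v ⬝ᵥ (Mᵀ * S * M).mulVec v = (M.mulVec v) ⬝ᵥ S.mulVec (M.mulVec v) := by
  rw [← mulVec_mulVec, ← mulVec_mulVec, dotProduct_mulVec, vecMul_transpose]

lemma aux_dot_mulVec_left {n p : Type*} [Fintype n] [Fintype p]
    (B : Matrix p n ℝ) (u : n → ℝ) (w : p → ℝ) :
    (B.mulVec u) ⬝ᵥ w = u ⬝ᵥ (Bᵀ.mulVec w) := by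
  rw [dotProduct_comm, dotProduct_mulVec, ← mulVec_transpose, dotProduct_comm]

lemma aux_dot1 {n₁ n₂ m₁ m₂ : ℕ} (i : Fin m₁) (j : Fin n₁)
    (v : (Fin n₁ ⊕ Fin n₂) → ℝ) (g : (Fin m₁ ⊕ Fin m₂) → ℝ) :
    (fromBlocks (Matrix.single i j 1) 0 0 (0 : Matrix (Fin m₂) (Fin n₂) ℝ)).mulVec v ⬝ᵥ g
      = v (Sum.inl j) * g (Sum.inl i) := by
  simp [dotProduct, Fintype.sum_sum_type, mulVec, fromBlocks, Matrix.single,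
    Finset.sum_ite_eq', ite_and, Finset.mul_sum]

lemma aux_dot2 {n₁ n₂ m₁ m₂ : ℕ} (i : Fin m₂) (j : Fin n₂)
    (v : (Fin n₁ ⊕ Fin n₂) → ℝ) (g : (Fin m₁ ⊕ Fin m₂) → ℝ) :
    (fromBlocks (0 : Matrix (Fin m₁) (Fin n₁) ℝ) 0 0 (Matrix.single i j 1)).mulVec v ⬝ᵥ g
      = v (Sum.inr j) * g (Sum.inr i) := by
  simp [dotProduct, Fintype.sum_sum_type, mulVec, fromBlocks, Matrix.single,
    Finset.sum_ite_eq', ite_and, Finset.mul_sum]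

lemma aux_blockapply₁ {n₁ n₂ m₁ m₂ : ℕ}
    (Υ : Matrix (Fin m₁ ⊕ Fin m₂) (Fin m₁ ⊕ Fin m₂) ℝ)
    (M : Matrix (Fin m₁ ⊕ Fin m₂) (Fin n₁ ⊕ Fin n₂) ℝ)
    (K₁ : Matrix (Fin m₁) (Fin n₁) ℝ) (K₂ : Matrix (Fin m₂) (Fin n₂) ℝ)
    (v : (Fin n₁ ⊕ Fin n₂) → ℝ) (i : Fin m₁) :
    ((Υ * fromBlocks K₁ 0 0 K₂ + M).mulVec v) (Sum.inl i)
      = (Υ.toBlocks₁₁ * K₁ + M.toBlocks₁₁).mulVec (fun l => v (Sum.inl l)) i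
        + (Υ.toBlocks₁₂ * K₂ + M.toBlocks₁₂).mulVec (fun l => v (Sum.inr l)) i := by
  simp [mulVec, dotProduct, Fintype.sum_sum_type, Matrix.mul_apply, Matrix.add_apply,
    fromBlocks, toBlocks₁₁, toBlocks₁₂, Finset.sum_add_distrib, Finset.sum_mul, Finset.mul_sum]

lemma aux_blockapply₂ {n₁ n₂ m₁ m₂ : ℕ}
    (Υ : Matrix (Fin m₁ ⊕ Fin m₂) (Fin m₁ ⊕ Fin m₂) ℝ)
    (M : Matrix (Fin m₁ ⊕ Fin m₂) (Fin n₁ ⊕ Fin n₂) ℝ)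
    (K₁ : Matrix (Fin m₁) (Fin n₁) ℝ) (K₂ : Matrix (Fin m₂) (Fin n₂) ℝ)
    (v : (Fin n₁ ⊕ Fin n₂) → ℝ) (i : Fin m₂) :
    ((Υ * fromBlocks K₁ 0 0 K₂ + M).mulVec v) (Sum.inr i)
      = (Υ.toBlocks₂₁ * K₁ + M.toBlocks₂₁).mulVec (fun l => v (Sum.inl l)) i
        + (Υ.toBlocks₂₂ * K₂ + M.toBlocks₂₂).mulVec (fun l => v (Sum.inr l)) i := by
  simp [mulVec, dotProduct, Fintype.sum_sum_type, Matrix.mul_apply, Matrix.add_apply,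
    fromBlocks, toBlocks₂₁, toBlocks₂₂, Finset.sum_add_distrib, Finset.sum_mul, Finset.mul_sum]

lemma aux_fromBlocks_add_smul {n₁ n₂ m₁ m₂ : ℕ} (t : ℝ)
    (K₁ Δ₁ : Matrix (Fin m₁) (Fin n₁) ℝ) (K₂ Δ₂ : Matrix (Fin m₂) (Fin n₂) ℝ) :
    fromBlocks (K₁ + t • Δ₁) 0 0 (K₂ + t • Δ₂)
      = fromBlocks K₁ 0 0 K₂ + t • fromBlocks Δ₁ 0 0 Δ₂ := by
  ext i j
  cases i <;> cases j <;> simp [fromBlocks]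

lemma aux_step {n p : Type*} [Fintype n] [Fintype p]
    (Q P₁ Cl : Matrix n n ℝ) (R : Matrix p p ℝ) (K : Matrix p n ℝ) (v : n → ℝ) :
    v ⬝ᵥ (Q + Kᵀ * R * K + Clᵀ * P₁ * Cl).mulVec v
      = v ⬝ᵥ Q.mulVec v + (K.mulVec v) ⬝ᵥ R.mulVec (K.mulVec v)
        + (Cl.mulVec v) ⬝ᵥ P₁.mulVec (Cl.mulVec v) := by
  simp only [add_mulVec, dotProduct_add, aux_conj_quad]

lemma aux_sandwich_symm {n p : Type*} [Fintype n] [Fintype p]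
    (X : Matrix p n ℝ) (S : Matrix p p ℝ) (hS : Sᵀ = S) :
    (Xᵀ * S * X)ᵀ = Xᵀ * S * X := by
  rw [transpose_mul, transpose_mul, transpose_transpose, hS, Matrix.mul_assoc]

lemma aux_aconv {n p : Type*} [Fintype n] [Fintype p]
    (R : Matrix p p ℝ) (P₁ : Matrix n n ℝ) (Bm : Matrix n p ℝ)
    (Km : Matrix p n ℝ) (Am : Matrix n n ℝ) (wv : p → ℝ) (v : n → ℝ) :
    wv ⬝ᵥ R.mulVec (Km.mulVec v)
      + (Bm.mulVec wv) ⬝ᵥ P₁.mulVec ((Am + Bm * Km).mulVec v)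
      = wv ⬝ᵥ (((R + Bmᵀ * P₁ * Bm) * Km + Bmᵀ * P₁ * Am).mulVec v) := by
  rw [aux_dot_mulVec_left]
  simp only [mulVec_mulVec]
  rw [← dotProduct_add, ← add_mulVec]
  congr 2
  simp only [Matrix.mul_add, Matrix.add_mul, Matrix.mul_assoc]
  abel

end Aux

noncomputable def stJ {n₁ n₂ m₁ m₂ : ℕ}
    (Q : Matrix (Fin n₁ ⊕ Fin n₂) (Fin n₁ ⊕ Fin n₂) ℝ)
    (R : Matrix (Fin m₁ ⊕ Fin m₂) (Fin m₁ ⊕ Fin m₂) ℝ)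
    (K₁ : Matrix (Fin m₁) (Fin n₁) ℝ) (K₂ : Matrix (Fin m₂) (Fin n₂) ℝ)
    (z : (Fin n₁ ⊕ Fin n₂) → ℝ) : ℝ :=
  z ⬝ᵥ Q.mulVec z + (Matrix.fromBlocks K₁ 0 0 K₂).mulVec z ⬝ᵥ
    R.mulVec ((Matrix.fromBlocks K₁ 0 0 K₂).mulVec z)

/-- Theorem 1: first-order necessary conditions for an optimal
sequence of block-diagonal gains `K(k) = diag(K₁(k), K₂(k))`. -/
theorem decentralized_LQ_necessary_conditions
    {n₁ n₂ m₁ m₂ : ℕ}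
    (A : Matrix (Fin n₁ ⊕ Fin n₂) (Fin n₁ ⊕ Fin n₂) ℝ)
    (B : Matrix (Fin n₁ ⊕ Fin n₂) (Fin m₁ ⊕ Fin m₂) ℝ)
    (Q PN : Matrix (Fin n₁ ⊕ Fin n₂) (Fin n₁ ⊕ Fin n₂) ℝ)
    (R : Matrix (Fin m₁ ⊕ Fin m₂) (Fin m₁ ⊕ Fin m₂) ℝ)
    (hQpsd : Q.PosSemidef) (hRpsd : R.PosSemidef) (hPNpsd : PN.PosSemidef)
    (N : ℕ)
    -- the optimal gains and the corresponding closed-loop trajectory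
    (K₁ : ℕ → Matrix (Fin m₁) (Fin n₁) ℝ)
    (K₂ : ℕ → Matrix (Fin m₂) (Fin n₂) ℝ)
    (x : ℕ → (Fin n₁ ⊕ Fin n₂) → ℝ)
    (hx : ∀ k, x (k + 1) =
      (A + B * Matrix.fromBlocks (K₁ k) 0 0 (K₂ k)).mulVec (x k))
    -- optimality of (K₁, K₂) among all block-diagonal gain sequences
    (hopt : ∀ (K₁' : ℕ → Matrix (Fin m₁) (Fin n₁) ℝ)
        (K₂' : ℕ → Matrix (Fin m₂) (Fin n₂) ℝ)
        (x' : ℕ → (Fin n₁ ⊕ Fin n₂) → ℝ),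
      x' 0 = x 0 →
      (∀ k, x' (k + 1) =
        (A + B * Matrix.fromBlocks (K₁' k) 0 0 (K₂' k)).mulVec (x' k)) →
      (∑ k ∈ Finset.range (N + 1),
          (x k ⬝ᵥ Q.mulVec (x k) +
            (Matrix.fromBlocks (K₁ k) 0 0 (K₂ k)).mulVec (x k) ⬝ᵥ
              R.mulVec ((Matrix.fromBlocks (K₁ k) 0 0 (K₂ k)).mulVec (x k)))) +
          x (N + 1) ⬝ᵥ PN.mulVec (x (N + 1)) ≤
        (∑ k ∈ Finset.range (N + 1),
          (x' k ⬝ᵥ Q.mulVec (x' k) +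
            (Matrix.fromBlocks (K₁' k) 0 0 (K₂' k)).mulVec (x' k) ⬝ᵥ
              R.mulVec ((Matrix.fromBlocks (K₁' k) 0 0 (K₂' k)).mulVec (x' k)))) +
          x' (N + 1) ⬝ᵥ PN.mulVec (x' (N + 1)))
    -- the outer-product matrices along the optimal trajectory
    (X11 : ℕ → Matrix (Fin n₁) (Fin n₁) ℝ)
    (X12 : ℕ → Matrix (Fin n₁) (Fin n₂) ℝ)
    (X22 : ℕ → Matrix (Fin n₂) (Fin n₂) ℝ)
    (hX11 : ∀ k, X11 k =
      vecMulVec (fun i => x k (Sum.inl i)) (fun i => x k (Sum.inl i)))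
    (hX12 : ∀ k, X12 k =
      vecMulVec (fun i => x k (Sum.inl i)) (fun i => x k (Sum.inr i)))
    (hX22 : ∀ k, X22 k =
      vecMulVec (fun i => x k (Sum.inr i)) (fun i => x k (Sum.inr i)))
    -- the backward Riccati-type recursion
    (P : ℕ → Matrix (Fin n₁ ⊕ Fin n₂) (Fin n₁ ⊕ Fin n₂) ℝ)
    (hPterm : P (N + 1) = PN)
    (hPrec : ∀ k ≤ N, P k =
      Q + (Matrix.fromBlocks (K₁ k) 0 0 (K₂ k))ᵀ * R *
            Matrix.fromBlocks (K₁ k) 0 0 (K₂ k) +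
        (A + B * Matrix.fromBlocks (K₁ k) 0 0 (K₂ k))ᵀ * P (k + 1) *
          (A + B * Matrix.fromBlocks (K₁ k) 0 0 (K₂ k)))
    -- Υ(k) = R + BᵀP(k+1)B and M(k) = BᵀP(k+1)A
    (Υ : ℕ → Matrix (Fin m₁ ⊕ Fin m₂) (Fin m₁ ⊕ Fin m₂) ℝ)
    (M : ℕ → Matrix (Fin m₁ ⊕ Fin m₂) (Fin n₁ ⊕ Fin n₂) ℝ)
    (hΥ : ∀ k, Υ k = R + Bᵀ * P (k + 1) * B)
    (hM : ∀ k, M k = Bᵀ * P (k + 1) * A) :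
    ∀ k ≤ N,
      (Υ k).toBlocks₁₁ * K₁ k * X11 k + (M k).toBlocks₁₁ * X11 k +
          (Υ k).toBlocks₁₂ * K₂ k * (X12 k)ᵀ + (M k).toBlocks₁₂ * (X12 k)ᵀ = 0 ∧
      (Υ k).toBlocks₂₂ * K₂ k * X22 k + (M k).toBlocks₂₂ * X22 k +
          ((Υ k).toBlocks₁₂)ᵀ * K₁ k * X12 k + (M k).toBlocks₂₁ * X12 k = 0 := by
  
  classical
  have hQs : Qᵀ = Q := by simpa [Matrix.IsHermitian] using hQpsd.1
  have hRs : Rᵀ = R := by simpa [Matrix.IsHermitian] using hRpsd.1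
  have hPNs : PNᵀ = PN := by simpa [Matrix.IsHermitian] using hPNpsd.1
  -- symmetry of P
  have Psym : ∀ d s, s + d = N + 1 → (P s)ᵀ = P s := by
    intro d
    induction d with
    | zero =>
      intro s hs
      have hsEq : s = N + 1 := by omega
      subst hsEq
      rw [hPterm, hPNs]
    | succ d ih =>
      intro s hs
      have hsN : s ≤ N := by omega
      have hP1 : (P (s+1))ᵀ = P (s+1) := ih (s+1) (by omega)
      rw [hPrec s hsN]
      rw [transpose_add, transpose_add, hQs, aux_sandwich_symm _ R hRs,
        aux_sandwich_symm _ (P (s+1)) hP1]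
  -- cost-to-go identity
  have ctg : ∀ d s, s + d = N + 1 → ∀ z : ℕ → (Fin n₁ ⊕ Fin n₂) → ℝ,
      (∀ j, s ≤ j → z (j+1) = (A + B * Matrix.fromBlocks (K₁ j) 0 0 (K₂ j)).mulVec (z j)) →
      (∑ j ∈ Finset.Ico s (N+1), stJ Q R (K₁ j) (K₂ j) (z j))
        + z (N+1) ⬝ᵥ PN.mulVec (z (N+1)) = z s ⬝ᵥ (P s).mulVec (z s) := by
    intro d
    induction d with
    | zero =>
      intro s hs z hz
      have hsEq : s = N + 1 := by omega
      subst hsEq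
      simp [hPterm]
    | succ d ih =>
      intro s hs z hz
      have hsN : s ≤ N := by omega
      rw [Finset.sum_eq_sum_Ico_succ_bot (by omega : s < N + 1)]
      rw [add_assoc, ih (s+1) (by omega) z (fun j hj => hz j (by omega))]
      rw [hz s le_rfl, hPrec s hsN, aux_step]
      simp only [stJ]
  intro k hk
  have hP1s : (P (k+1))ᵀ = P (k+1) := Psym (N - k) (k+1) (by omega)
  -- the key first-order condition, for an arbitrary block-diagonal direction
  have key : ∀ (Δ₁ : Matrix (Fin m₁) (Fin n₁) ℝ) (Δ₂ : Matrix (Fin m₂) (Fin n₂) ℝ),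
      (Matrix.fromBlocks Δ₁ 0 0 Δ₂).mulVec (x k) ⬝ᵥ
        ((Υ k * Matrix.fromBlocks (K₁ k) 0 0 (K₂ k) + M k).mulVec (x k)) = 0 := by
    intro Δ₁ Δ₂
    set v : (Fin n₁ ⊕ Fin n₂) → ℝ := x k with hv
    set w : (Fin m₁ ⊕ Fin m₂) → ℝ := (Matrix.fromBlocks Δ₁ 0 0 Δ₂).mulVec v with hw
    set u : (Fin n₁ ⊕ Fin n₂) → ℝ :=
      (A + B * Matrix.fromBlocks (K₁ k) 0 0 (K₂ k)).mulVec v with hu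
    set a : ℝ := w ⬝ᵥ R.mulVec ((Matrix.fromBlocks (K₁ k) 0 0 (K₂ k)).mulVec v)
      + (B.mulVec w) ⬝ᵥ (P (k+1)).mulVec u with ha
    set b : ℝ := w ⬝ᵥ R.mulVec w + (B.mulVec w) ⬝ᵥ (P (k+1)).mulVec (B.mulVec w) with hb
    have hineq : ∀ t : ℝ, 0 ≤ 2*t*a + t^2*b := by
      intro t
      set K₁' : ℕ → Matrix (Fin m₁) (Fin n₁) ℝ :=
        fun j => if j = k then K₁ k + t • Δ₁ else K₁ j with hK₁'
      set K₂' : ℕ → Matrix (Fin m₂) (Fin n₂) ℝ :=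
        fun j => if j = k then K₂ k + t • Δ₂ else K₂ j with hK₂'
      set x' : ℕ → (Fin n₁ ⊕ Fin n₂) → ℝ := fun j => Nat.rec (x 0)
        (fun j xj => (A + B * Matrix.fromBlocks (K₁' j) 0 0 (K₂' j)).mulVec xj) j with hx'
      have hx'0 : x' 0 = x 0 := rfl
      have hx's : ∀ j, x' (j+1) =
          (A + B * Matrix.fromBlocks (K₁' j) 0 0 (K₂' j)).mulVec (x' j) := fun j => rfl
      have hKeq : ∀ j, j ≠ k →
          Matrix.fromBlocks (K₁' j) 0 0 (K₂' j) = Matrix.fromBlocks (K₁ j) 0 0 (K₂ j) := by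
        intro j hj; simp [hK₁', hK₂', hj]
      have hxeq : ∀ j, j ≤ k → x' j = x j := by
        intro j
        induction j with
        | zero => intro _; exact hx'0
        | succ j ihj =>
          intro hj
          rw [hx's j, hKeq j (by omega), ihj (by omega)]
          exact (hx j).symm
      have hopt' := hopt K₁' K₂' x' hx'0 hx's
      have hopt'' : (∑ j ∈ Finset.range (N+1), stJ Q R (K₁ j) (K₂ j) (x j))
            + x (N+1) ⬝ᵥ PN.mulVec (x (N+1))
          ≤ (∑ j ∈ Finset.range (N+1), stJ Q R (K₁' j) (K₂' j) (x' j))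
            + x' (N+1) ⬝ᵥ PN.mulVec (x' (N+1)) := hopt'
      have hsplit : ∀ (f : ℕ → ℝ), ∑ j ∈ Finset.range (N+1), f j
          = ((∑ j ∈ Finset.Ico 0 k, f j) + f k) + ∑ j ∈ Finset.Ico (k+1) (N+1), f j := by
        intro f
        rw [Finset.range_eq_Ico,
          ← Finset.sum_Ico_consecutive f (Nat.zero_le k) (by omega : k ≤ N+1),
          Finset.sum_eq_sum_Ico_succ_bot (by omega : k < N+1)]
        ring
      rw [hsplit (fun j => stJ Q R (K₁ j) (K₂ j) (x j)),
        hsplit (fun j => stJ Q R (K₁' j) (K₂' j) (x' j))] at hopt''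
      have hC : ∑ j ∈ Finset.Ico 0 k, stJ Q R (K₁' j) (K₂' j) (x' j)
          = ∑ j ∈ Finset.Ico 0 k, stJ Q R (K₁ j) (K₂ j) (x j) := by
        refine Finset.sum_congr rfl ?_
        intro j hj
        have hjk : j < k := (Finset.mem_Ico.mp hj).2
        rw [hxeq j (by omega)]
        simp [hK₁', hK₂', Nat.ne_of_lt hjk]
      have hT : ∑ j ∈ Finset.Ico (k+1) (N+1), stJ Q R (K₁' j) (K₂' j) (x' j)
          = ∑ j ∈ Finset.Ico (k+1) (N+1), stJ Q R (K₁ j) (K₂ j) (x' j) := by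
        refine Finset.sum_congr rfl ?_
        intro j hj
        have hjk : k + 1 ≤ j := (Finset.mem_Ico.mp hj).1
        have hne : j ≠ k := by omega
        simp [hK₁', hK₂', hne]
      rw [hC, hT] at hopt''
      have hdyn' : ∀ j, k+1 ≤ j → x' (j+1) =
          (A + B * Matrix.fromBlocks (K₁ j) 0 0 (K₂ j)).mulVec (x' j) := by
        intro j hj
        rw [hx's j, hKeq j (by omega)]
      have htail' := ctg (N - k) (k+1) (by omega) x' hdyn'
      have htail := ctg (N - k) (k+1) (by omega) x (fun j _ => hx j)
      have hmain : stJ Q R (K₁ k) (K₂ k) (x k) + x (k+1) ⬝ᵥ (P (k+1)).mulVec (x (k+1))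
          ≤ stJ Q R (K₁' k) (K₂' k) (x' k)
            + x' (k+1) ⬝ᵥ (P (k+1)).mulVec (x' (k+1)) := by
        linarith [hopt'', htail, htail']
      -- expand everything
      have hfk' : stJ Q R (K₁' k) (K₂' k) (x' k)
          = stJ Q R (K₁ k + t • Δ₁) (K₂ k + t • Δ₂) v := by
        rw [hxeq k le_rfl]
        simp [hK₁', hK₂', hv]
      have e1 : stJ Q R (K₁ k) (K₂ k) (x k)
          = v ⬝ᵥ Q.mulVec v + ((Matrix.fromBlocks (K₁ k) 0 0 (K₂ k)).mulVec v) ⬝ᵥ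
              R.mulVec ((Matrix.fromBlocks (K₁ k) 0 0 (K₂ k)).mulVec v) := by
        simp only [stJ, hv]
      have e2 : stJ Q R (K₁ k + t • Δ₁) (K₂ k + t • Δ₂) v
          = v ⬝ᵥ Q.mulVec v + (((Matrix.fromBlocks (K₁ k) 0 0 (K₂ k)).mulVec v) ⬝ᵥ
              R.mulVec ((Matrix.fromBlocks (K₁ k) 0 0 (K₂ k)).mulVec v)
            + 2*t*(w ⬝ᵥ R.mulVec ((Matrix.fromBlocks (K₁ k) 0 0 (K₂ k)).mulVec v))
            + t^2*(w ⬝ᵥ R.mulVec w)) := by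
        simp only [stJ]
        rw [aux_fromBlocks_add_smul, add_mulVec, smul_mulVec, ← hw,
          aux_quad_expand R hRs]
      have e3 : x (k+1) ⬝ᵥ (P (k+1)).mulVec (x (k+1)) = u ⬝ᵥ (P (k+1)).mulVec u := by
        rw [hx k, hu, hv]
      have e4 : x' (k+1) ⬝ᵥ (P (k+1)).mulVec (x' (k+1))
          = u ⬝ᵥ (P (k+1)).mulVec u
            + 2*t*((B.mulVec w) ⬝ᵥ (P (k+1)).mulVec u)
            + t^2*((B.mulVec w) ⬝ᵥ (P (k+1)).mulVec (B.mulVec w)) := by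
        have hx'k1 : x' (k+1) = u + t • (B.mulVec w) := by
          rw [hx's k, hxeq k le_rfl, ← hv]
          have : Matrix.fromBlocks (K₁' k) 0 0 (K₂' k)
              = Matrix.fromBlocks (K₁ k) 0 0 (K₂ k) + t • Matrix.fromBlocks Δ₁ 0 0 Δ₂ := by
            simp [hK₁', hK₂', aux_fromBlocks_add_smul]
          rw [this, Matrix.mul_add, Matrix.mul_smul, ← add_assoc, add_mulVec,
            smul_mulVec, ← mulVec_mulVec, ← hu, ← hw]
        rw [hx'k1, aux_quad_expand (P (k+1)) hP1s]
      have hexp : 2*t*a + t^2*b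
          = (stJ Q R (K₁' k) (K₂' k) (x' k) + x' (k+1) ⬝ᵥ (P (k+1)).mulVec (x' (k+1)))
            - (stJ Q R (K₁ k) (K₂ k) (x k) + x (k+1) ⬝ᵥ (P (k+1)).mulVec (x (k+1))) := by
        rw [hfk', e1, e2, e3, e4, ha, hb]; ring
      linarith [hmain, hexp]
    have ha0 : a = 0 := aux_key_scalar a b hineq
    have hconv : a = w ⬝ᵥ ((Υ k * Matrix.fromBlocks (K₁ k) 0 0 (K₂ k) + M k).mulVec v) := by
      rw [ha, hu, aux_aconv, hΥ k, hM k]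
    rw [← hconv]
    exact ha0
  -- specialize to coordinate directions
  have hg1 : ∀ (i : Fin m₁) (j : Fin n₁),
      ((Υ k * Matrix.fromBlocks (K₁ k) 0 0 (K₂ k) + M k).mulVec (x k)) (Sum.inl i)
        * x k (Sum.inl j) = 0 := by
    intro i j
    have h := key (Matrix.single i j 1) 0
    rw [aux_dot1] at h
    rw [mul_comm]
    exact h
  have hg2 : ∀ (i : Fin m₂) (j : Fin n₂),
      ((Υ k * Matrix.fromBlocks (K₁ k) 0 0 (K₂ k) + M k).mulVec (x k)) (Sum.inr i)
        * x k (Sum.inr j) = 0 := by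
    intro i j
    have h := key 0 (Matrix.single i j 1)
    rw [aux_dot2] at h
    rw [mul_comm]
    exact h
  have hΥs : (Υ k)ᵀ = Υ k := by
    rw [hΥ k, transpose_add, hRs, aux_sandwich_symm B (P (k+1)) hP1s]
  have h12 : ((Υ k).toBlocks₁₂)ᵀ = (Υ k).toBlocks₂₁ := by
    ext i j
    have := congrFun (congrFun hΥs (Sum.inr i)) (Sum.inl j)
    simpa [toBlocks₁₂, toBlocks₂₁] using this
  constructor
  · ext i j
    rw [hX11 k, hX12 k, aux_transpose_vecMulVec, aux_mul_vecMulVec, aux_mul_vecMulVec,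
      aux_mul_vecMulVec, aux_mul_vecMulVec]
    simp only [Matrix.add_apply, vecMulVec_apply, Matrix.zero_apply]
    have h := hg1 i j
    rw [aux_blockapply₁] at h
    simp only [add_mulVec, Pi.add_apply] at h
    linear_combination h
  · ext i j
    rw [hX22 k, hX12 k, h12, aux_mul_vecMulVec, aux_mul_vecMulVec,
      aux_mul_vecMulVec, aux_mul_vecMulVec]
    simp only [Matrix.add_apply, vecMulVec_apply, Matrix.zero_apply]
    have h := hg2 i j
    rw [aux_blockapply₂] at h
    simp only [add_mulVec, Pi.add_apply] at h
    linear_combination h
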